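/- arXiv:2412.09434 — 5 statements merged into one kernel-verified Lean document; each statement's English description precedes it below -/
import Mathlib

section
/- Let G be a finite simple graph and X a vector field on G, regarded as the first order differential operator Xφ(i) = Σ_{darts u with π(u)=i} X(u)(φ(π₊(u)) − φ(π(u))) on C(G). Then the adjoint X* of X with respect to the inner product on C(G) is given by X*ψ = X̄ψ + (div X)·ψ, i.e. X*ψ(i) = Σ_{darts u with π(u)=i} X(ū)(ψ(π₊(u)) − ψ(π(u))) + ψ(i)·div X(i) for all ψ ∈ C(G) and i ∈ V_G. -/
open SimpleGraph Finset

variable {V : Type*} [Fintype V] [DecidableEq V]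

/-- The gradient of a function `φ : V → ℝ`: the vector field `(∇φ)(u) = φ(π₊(u)) − φ(π(u))`. -/
def grad (G : SimpleGraph V) (φ : V → ℝ) : G.Dart → ℝ := fun u => φ u.snd - φ u.fst

/-- The divergence of a vector field: `(div X)(i) = Σ_{darts u with π(u)=i} (X(ū) − X(u))`. -/
def divergence (G : SimpleGraph V) [DecidableRel G.Adj] (X : G.Dart → ℝ) : V → ℝ :=
  fun i => ∑ u ∈ Finset.univ.filter (fun u : G.Dart => u.fst = i), (X u.symm - X u)
/-- A vector field `X` regarded as a first order differential operator:
`Xφ(i) = Σ_{darts u with π(u)=i} X(u)(φ(π₊(u)) − φ(π(u)))`. -/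
def fieldOp (G : SimpleGraph V) [DecidableRel G.Adj] (X : G.Dart → ℝ) (φ : V → ℝ) : V → ℝ :=
  fun i => ∑ u ∈ Finset.univ.filter (fun u : G.Dart => u.fst = i), X u * (φ u.snd - φ u.fst)

/-- The adjoint of the first order differential operator `X` is given by
`X*ψ = X̄ψ + (div X)·ψ`: for all `φ, ψ`, `⟨Xφ, ψ⟩ = ⟨φ, X̄ψ + (div X)·ψ⟩`. -/
theorem fieldOp_adjoint (G : SimpleGraph V) [DecidableRel G.Adj] (X : G.Dart → ℝ) :
    ∀ φ ψ : V → ℝ,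
      ∑ i : V, fieldOp G X φ i * ψ i =
        ∑ i : V, φ i * (fieldOp G (fun u => X u.symm) ψ i + ψ i * divergence G X i) := by
  intro φ ψ
  have hfib : ∀ f : G.Dart → ℝ,
      ∑ i : V, ∑ u ∈ Finset.univ.filter (fun u : G.Dart => u.fst = i), f u
        = ∑ u : G.Dart, f u := fun f =>
    Finset.sum_fiberwise_of_maps_to (fun x _ => Finset.mem_univ _) f
  have L : ∑ i : V, fieldOp G X φ i * ψ i
      = ∑ u : G.Dart, X u * (φ u.snd - φ u.fst) * ψ u.fst := by
    rw [← hfib]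
    refine Finset.sum_congr rfl fun i _ => ?_
    rw [fieldOp, Finset.sum_mul]
    refine Finset.sum_congr rfl fun u hu => ?_
    rw [(Finset.mem_filter.mp hu).2]
  have R : ∑ i : V, φ i * (fieldOp G (fun u => X u.symm) ψ i + ψ i * divergence G X i)
      = ∑ u : G.Dart,
          φ u.fst * (X u.symm * (ψ u.snd - ψ u.fst) + ψ u.fst * (X u.symm - X u)) := by
    rw [← hfib]
    refine Finset.sum_congr rfl fun i _ => ?_
    rw [fieldOp, divergence, Finset.mul_sum, ← Finset.sum_add_distrib, Finset.mul_sum]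
    refine Finset.sum_congr rfl fun u hu => ?_
    rw [(Finset.mem_filter.mp hu).2]
  rw [L, R]
  have key : ∑ u : G.Dart, X u * φ u.snd * ψ u.fst
      = ∑ u : G.Dart, φ u.fst * (X u.symm * ψ u.snd) :=
    Fintype.sum_equiv
      ⟨SimpleGraph.Dart.symm, SimpleGraph.Dart.symm,
        fun d => SimpleGraph.Dart.symm_symm d, fun d => SimpleGraph.Dart.symm_symm d⟩
      _ _ (fun u => by
        show X u * φ u.snd * ψ u.fst = φ u.symm.fst * (X u.symm.symm * ψ u.symm.snd)
        rw [SimpleGraph.Dart.symm_symm]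
        show _ = φ u.snd * (X u * ψ u.fst)
        ring)
  have expand : ∀ u : G.Dart,
      X u * (φ u.snd - φ u.fst) * ψ u.fst
        = X u * φ u.snd * ψ u.fst - X u * φ u.fst * ψ u.fst := fun u => by ring
  have expand2 : ∀ u : G.Dart,
      φ u.fst * (X u.symm * (ψ u.snd - ψ u.fst) + ψ u.fst * (X u.symm - X u))
        = φ u.fst * (X u.symm * ψ u.snd) - X u * φ u.fst * ψ u.fst := fun u => by ring
  simp only [expand, expand2, Finset.sum_sub_distrib, key]
end

section
/- Let G be a finite simple graph and X a vector field on G, regarded as the operator Xφ(i) = Σ_{darts u with π(u)=i} X(u)(φ(π₊(u)) − φ(π(u))) on C(G). Then X is self-adjoint with respect to the inner product on C(G) if and only if X̄ = X, and X is skew-adjoint if and only if both X̄ = −X and div X = 0. -/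
open SimpleGraph Finset

variable {V : Type*} [Fintype V] [DecidableEq V]

section Aux

variable (G : SimpleGraph V) [DecidableRel G.Adj]

/-- Reindexing a sum over darts by the reversal involution. -/
lemma sum_dart_symm (f : G.Dart → ℝ) : ∑ u : G.Dart, f u.symm = ∑ u : G.Dart, f u :=
  Fintype.sum_equiv (Function.Involutive.toPerm _ Dart.symm_involutive)
    (fun u => f u.symm) f (fun _ => rfl)

/-- Collecting a sum over darts into fibers over the basepoint. -/
lemma sum_fiber_mul (F : G.Dart → ℝ) (ψ : V → ℝ) :
    ∑ u : G.Dart, F u * ψ u.fst =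
      ∑ i : V, (∑ u ∈ Finset.univ.filter (fun u : G.Dart => u.fst = i), F u) * ψ i := by
  rw [← Finset.sum_fiberwise Finset.univ (fun u : G.Dart => u.fst)
    (fun u => F u * ψ u.fst)]
  refine Finset.sum_congr rfl fun i _ => ?_
  rw [Finset.sum_mul]
  refine Finset.sum_congr rfl fun u hu => ?_
  rw [(Finset.mem_filter.1 hu).2]

lemma sum_fieldOp_mul (X : G.Dart → ℝ) (φ ψ : V → ℝ) :
    ∑ i : V, fieldOp G X φ i * ψ i =
      ∑ u : G.Dart, X u * (φ u.snd - φ u.fst) * ψ u.fst :=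
  (sum_fiber_mul G _ ψ).symm

lemma sum_mul_fieldOp (X : G.Dart → ℝ) (φ ψ : V → ℝ) :
    ∑ i : V, φ i * fieldOp G X ψ i =
      ∑ u : G.Dart, X u * (ψ u.snd - ψ u.fst) * φ u.fst := by
  calc ∑ i : V, φ i * fieldOp G X ψ i
      = ∑ i : V, (∑ u ∈ Finset.univ.filter (fun u : G.Dart => u.fst = i),
          X u * (ψ u.snd - ψ u.fst)) * φ i :=
        Finset.sum_congr rfl fun i _ => mul_comm _ _
    _ = _ := (sum_fiber_mul G _ φ).symm

/-- Key identity: pairing `X` with a gradient equals pairing the divergence data. -/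
lemma sum_mul_grad (X : G.Dart → ℝ) (h : V → ℝ) :
    ∑ u : G.Dart, X u * (h u.snd - h u.fst) =
      ∑ u : G.Dart, (X u.symm - X u) * h u.fst := by
  have key : ∑ u : G.Dart, X u * h u.snd = ∑ u : G.Dart, X u.symm * h u.fst := by
    rw [← sum_dart_symm G (fun u => X u.symm * h u.fst)]
    simp
  calc ∑ u : G.Dart, X u * (h u.snd - h u.fst)
      = ∑ u : G.Dart, (X u * h u.snd - X u * h u.fst) := by
        refine Finset.sum_congr rfl fun u _ => ?_; ring
    _ = (∑ u : G.Dart, X u * h u.snd) - ∑ u : G.Dart, X u * h u.fst :=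
        Finset.sum_sub_distrib _ _
    _ = (∑ u : G.Dart, X u.symm * h u.fst) - ∑ u : G.Dart, X u * h u.fst := by rw [key]
    _ = ∑ u : G.Dart, (X u.symm - X u) * h u.fst := by
        rw [← Finset.sum_sub_distrib]
        refine Finset.sum_congr rfl fun u _ => ?_; ring

lemma sum_single_eval (f : V → ℝ) (b : V) :
    ∑ i : V, f i * (Pi.single b 1 : V → ℝ) i = f b := by
  simp [Pi.single_apply, mul_ite]

lemma sum_single_eval' (f : V → ℝ) (b : V) :
    ∑ i : V, (Pi.single b 1 : V → ℝ) i * f i = f b := by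
  simp [Pi.single_apply, ite_mul]

lemma fieldOp_single_dart (X : G.Dart → ℝ) (u : G.Dart) :
    fieldOp G X (Pi.single u.snd (1 : ℝ)) u.fst = X u := by
  unfold fieldOp
  have hm : u ∈ Finset.univ.filter (fun v : G.Dart => v.fst = u.fst) := by simp
  have hz : ∀ v ∈ Finset.univ.filter (fun v : G.Dart => v.fst = u.fst), v ≠ u →
      X v * ((Pi.single u.snd 1 : V → ℝ) v.snd - (Pi.single u.snd 1 : V → ℝ) v.fst) = 0 := by
    intro v hv hvu
    have hf : v.fst = u.fst := (Finset.mem_filter.1 hv).2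
    have hs : v.snd ≠ u.snd := fun h => hvu (Dart.ext _ _ (Prod.ext hf h))
    have hfs : v.fst ≠ u.snd := by rw [hf]; exact Dart.fst_ne_snd u
    simp [Pi.single_apply, hs, hfs]
  rw [Finset.sum_eq_single_of_mem u hm hz]
  simp [Pi.single_apply, (Dart.fst_ne_snd u).symm]

lemma fieldOp_single_self (X : G.Dart → ℝ) (i : V) :
    fieldOp G X (Pi.single i (1 : ℝ)) i =
      -∑ u ∈ Finset.univ.filter (fun u : G.Dart => u.fst = i), X u := by
  unfold fieldOp
  rw [← Finset.sum_neg_distrib]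
  refine Finset.sum_congr rfl fun u hu => ?_
  have hf : u.fst = i := (Finset.mem_filter.1 hu).2
  have hs : u.snd ≠ i := by rw [← hf]; exact (Dart.fst_ne_snd u).symm
  simp [Pi.single_apply, hs, hf]

end Aux

/-- `X` is self-adjoint iff `X̄ = X`, and `X` is skew-adjoint iff
`X̄ = −X` and `div X = 0`. -/
theorem fieldOp_selfAdjoint_skewAdjoint_iff (G : SimpleGraph V) [DecidableRel G.Adj]
    (X : G.Dart → ℝ) :
    ((∀ φ ψ : V → ℝ, ∑ i : V, fieldOp G X φ i * ψ i = ∑ i : V, φ i * fieldOp G X ψ i) ↔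
      (∀ u : G.Dart, X u.symm = X u)) ∧
    ((∀ φ ψ : V → ℝ, ∑ i : V, fieldOp G X φ i * ψ i = -∑ i : V, φ i * fieldOp G X ψ i) ↔
      ((∀ u : G.Dart, X u.symm = -X u) ∧ divergence G X = 0)) := by
  constructor
  · constructor
    · intro h u
      have := h (Pi.single u.snd 1) (Pi.single u.fst 1)
      rw [sum_single_eval, sum_single_eval', fieldOp_single_dart] at this
      have h2 : fieldOp G X (Pi.single u.fst (1 : ℝ)) u.snd = X u.symm := by
        have := fieldOp_single_dart G X u.symm
        simpa using this
      rw [h2] at this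
      exact this.symm
    · intro hX φ ψ
      rw [sum_fieldOp_mul, sum_mul_fieldOp]
      have hr : ∑ u : G.Dart, X u * (ψ u.snd - ψ u.fst) * φ u.fst =
          ∑ u : G.Dart, X u * (ψ u.fst - ψ u.snd) * φ u.snd := by
        rw [← sum_dart_symm G (fun u => X u * (ψ u.fst - ψ u.snd) * φ u.snd)]
        simp [hX]
      rw [hr]
      have := sum_mul_grad G X (fun i => ψ i * φ i)
      have hz : ∑ u : G.Dart, (X u.symm - X u) * (ψ u.fst * φ u.fst) = 0 := by
        refine Finset.sum_eq_zero fun u _ => ?_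
        rw [hX u]; ring
      rw [hz] at this
      have expand : ∑ u : G.Dart, (X u * (φ u.snd - φ u.fst) * ψ u.fst -
          X u * (ψ u.fst - ψ u.snd) * φ u.snd) = 0 := by
        calc ∑ u : G.Dart, (X u * (φ u.snd - φ u.fst) * ψ u.fst -
              X u * (ψ u.fst - ψ u.snd) * φ u.snd)
            = ∑ u : G.Dart, X u * ((fun i => ψ i * φ i) u.snd - (fun i => ψ i * φ i) u.fst) := by
              refine Finset.sum_congr rfl fun u _ => ?_; simp; ring
          _ = 0 := this
      rw [Finset.sum_sub_distrib] at expand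
      linarith
  · constructor
    · intro h
      have hX : ∀ u : G.Dart, X u.symm = -X u := by
        intro u
        have := h (Pi.single u.snd 1) (Pi.single u.fst 1)
        rw [sum_single_eval, fieldOp_single_dart] at this
        have h2 : ∑ i : V, (Pi.single u.snd 1 : V → ℝ) i * fieldOp G X (Pi.single u.fst 1) i
            = X u.symm := by
          rw [sum_single_eval']
          have := fieldOp_single_dart G X u.symm
          simpa using this
        rw [h2] at this
        linarith
      refine ⟨hX, ?_⟩
      funext i
      have := h (Pi.single i 1) (Pi.single i 1)
      rw [sum_single_eval, sum_single_eval', fieldOp_single_self] at this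
      have hsum : ∑ u ∈ Finset.univ.filter (fun u : G.Dart => u.fst = i), X u = 0 := by
        linarith
      show divergence G X i = 0
      unfold divergence
      calc ∑ u ∈ Finset.univ.filter (fun u : G.Dart => u.fst = i), (X u.symm - X u)
          = ∑ u ∈ Finset.univ.filter (fun u : G.Dart => u.fst = i), (-2 * X u) := by
            refine Finset.sum_congr rfl fun u _ => ?_; rw [hX u]; ring
        _ = -2 * ∑ u ∈ Finset.univ.filter (fun u : G.Dart => u.fst = i), X u :=
            (Finset.mul_sum _ _ _).symm
        _ = 0 := by rw [hsum]; ring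
    · rintro ⟨hX, hdiv⟩ φ ψ
      rw [sum_fieldOp_mul, sum_mul_fieldOp]
      have hr : ∑ u : G.Dart, X u * (ψ u.snd - ψ u.fst) * φ u.fst =
          ∑ u : G.Dart, X u * (ψ u.snd - ψ u.fst) * φ u.snd := by
        rw [← sum_dart_symm G (fun u => X u * (ψ u.snd - ψ u.fst) * φ u.snd)]
        refine Finset.sum_congr rfl fun u _ => ?_
        simp only [Dart.symm_toProd, Prod.fst_swap, Prod.snd_swap, hX u]
        ring
      rw [hr]
      have key := sum_mul_grad G X (fun i => ψ i * φ i)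
      have hz : ∑ u : G.Dart, (X u.symm - X u) * (ψ u.fst * φ u.fst) = 0 := by
        rw [sum_fiber_mul G (fun u => X u.symm - X u) (fun i => ψ i * φ i)]
        refine Finset.sum_eq_zero fun i _ => ?_
        have : divergence G X i = 0 := congrFun hdiv i
        unfold divergence at this
        rw [this, zero_mul]
      rw [hz] at key
      have expand : ∑ u : G.Dart, (X u * (φ u.snd - φ u.fst) * ψ u.fst +
          X u * (ψ u.snd - ψ u.fst) * φ u.snd) = 0 := by
        calc ∑ u : G.Dart, (X u * (φ u.snd - φ u.fst) * ψ u.fst +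
              X u * (ψ u.snd - ψ u.fst) * φ u.snd)
            = ∑ u : G.Dart, X u * ((fun i => ψ i * φ i) u.snd - (fun i => ψ i * φ i) u.fst) := by
              refine Finset.sum_congr rfl fun u _ => ?_; simp; ring
          _ = 0 := key
      rw [Finset.sum_add_distrib] at expand
      linarith
end

section
/- Let G be a finite simple graph, S ⊆ V_G a subset of vertices, X a vector field on G regarded as the operator Xφ(i) = Σ_{darts u with π(u)=i} X(u)(φ(π₊(u)) − φ(π(u))), and φ ∈ C(G). Then Σ_{i∈S} Xφ(i) = Σ_{i∈S} φ(i)·div X(i) + Σ_{boundary darts u} n_S(u)·φ(π(u))·X(ū), where the last sum is over all darts u with exactly one endpoint in S, and n_S(u) = +1 if π(u) ∉ S and n_S(u) = −1 if π(u) ∈ S. -/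
open SimpleGraph Finset

variable {V : Type*} [Fintype V] [DecidableEq V]

lemma sum_fiber {G : SimpleGraph V} [DecidableRel G.Adj] (S : Finset V) (f : G.Dart → ℝ) :
    ∑ i ∈ S, ∑ u ∈ Finset.univ.filter (fun u : G.Dart => u.fst = i), f u
      = ∑ u ∈ Finset.univ.filter (fun u : G.Dart => u.fst ∈ S), f u := by
  simp_rw [Finset.sum_filter]
  rw [Finset.sum_comm]
  refine Finset.sum_congr rfl fun u _ => ?_
  simp [Finset.sum_ite_eq]

lemma sum_symm {G : SimpleGraph V} [DecidableRel G.Adj] (S : Finset V) (g : G.Dart → ℝ) :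
    ∑ u ∈ Finset.univ.filter (fun u : G.Dart => u.fst ∈ S), g u.symm
      = ∑ u ∈ Finset.univ.filter (fun u : G.Dart => u.snd ∈ S), g u := by
  refine Finset.sum_equiv ⟨Dart.symm, Dart.symm, Dart.symm_symm, Dart.symm_symm⟩ ?_ ?_ <;>
    intro u <;> simp

/-- For a subset `S` of vertices, a vector field `X` regarded as a first order
differential operator, and `φ ∈ C(G)`:
`Σ_{i∈S} Xφ(i) = Σ_{i∈S} φ(i)·div X(i) + Σ_{boundary darts u} n_S(u)·φ(π(u))·X(ū)`. -/
theorem fieldOp_sum_eq_div_add_boundary (G : SimpleGraph V) [DecidableRel G.Adj]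
    (S : Finset V) (X : G.Dart → ℝ) (φ : V → ℝ) :
    ∑ i ∈ S, fieldOp G X φ i =
      (∑ i ∈ S, φ i * divergence G X i) +
      ∑ u ∈ Finset.univ.filter (fun u : G.Dart => Xor (u.fst ∈ S) (u.snd ∈ S)),
        (if u.fst ∈ S then (-1 : ℝ) else 1) * (φ u.fst * X u.symm) := by
  have h1 : ∑ i ∈ S, fieldOp G X φ i
      = ∑ u ∈ Finset.univ.filter (fun u : G.Dart => u.fst ∈ S), X u * (φ u.snd - φ u.fst) :=
    sum_fiber S _
  have h2 : ∑ i ∈ S, φ i * divergence G X i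
      = ∑ u ∈ Finset.univ.filter (fun u : G.Dart => u.fst ∈ S), φ u.fst * (X u.symm - X u) := by
    rw [← sum_fiber S (fun u : G.Dart => φ u.fst * (X u.symm - X u))]
    refine Finset.sum_congr rfl fun i _ => ?_
    rw [divergence, Finset.mul_sum]
    exact Finset.sum_congr rfl fun u hu => by simp at hu; rw [hu]
  have h3 : ∑ u ∈ Finset.univ.filter (fun u : G.Dart => u.fst ∈ S), X u * φ u.snd
      = ∑ u ∈ Finset.univ.filter (fun u : G.Dart => u.snd ∈ S), X u.symm * φ u.fst := by
    rw [← sum_symm S (fun u : G.Dart => X u.symm * φ u.fst)]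
    refine Finset.sum_congr rfl fun u _ => by simp [mul_comm]
  rw [h1, h2]
  simp_rw [mul_sub, Finset.sum_sub_distrib, h3]
  have hB : ∑ x ∈ Finset.univ.filter (fun u : G.Dart => u.fst ∈ S), X x * φ x.fst
      = ∑ x ∈ Finset.univ.filter (fun u : G.Dart => u.fst ∈ S), φ x.fst * X x :=
    Finset.sum_congr rfl fun u _ => mul_comm _ _
  have key : ∑ u ∈ Finset.univ.filter (fun u : G.Dart => Xor (u.fst ∈ S) (u.snd ∈ S)),
        (if u.fst ∈ S then (-1 : ℝ) else 1) * (φ u.fst * X u.symm)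
      = (∑ u ∈ Finset.univ.filter (fun u : G.Dart => u.snd ∈ S), X u.symm * φ u.fst)
        - ∑ u ∈ Finset.univ.filter (fun u : G.Dart => u.fst ∈ S), φ u.fst * X u.symm := by
    simp_rw [Finset.sum_filter]
    rw [← Finset.sum_sub_distrib]
    refine Finset.sum_congr rfl fun u _ => ?_
    by_cases h : u.fst ∈ S <;> by_cases h' : u.snd ∈ S <;> simp [Xor, h, h'] <;> ring
  rw [hB, key]
  ring
end

section
/- (Green's Third Identity) Let G be a finite connected simple graph, S ⊆ V_G a subset of vertices, i ∈ V_G, and φ ∈ C(G). Let G_i be the Green's function with pole at i, i.e. the unique function in C̊(G) with ΔG_i = e_i − 1/|V_G|. Then Σ_{j∈S} G_i(j)·Δφ(j) = φ(i)·1_S(i) − (1/|V_G|)·Σ_{j∈S} φ(j) + Σ_{boundary darts u} n_S(u)·[G_i(π(u))·(φ(π₊(u)) − φ(π(u))) − φ(π(u))·(G_i(π₊(u)) − G_i(π(u)))], where the last sum is over all darts u with exactly one endpoint in S, n_S(u) = +1 if π(u) ∉ S and n_S(u) = −1 if π(u) ∈ S, and 1_S is the indicator function of S. -/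
open SimpleGraph Finset

variable {V : Type*} [Fintype V] [DecidableEq V]

/-- The Laplacian `Δ = div ∘ ∇`. -/
def lap (G : SimpleGraph V) [DecidableRel G.Adj] (φ : V → ℝ) : V → ℝ :=
  divergence G (grad G φ)

/-- (Green's Third Identity) Let `Gi` be the Green's function with pole at `i`: the unique
function in `C̊(G)` with `ΔGi = e_i − 1/|V|`. Then
`Σ_{j∈S} Gi(j)·Δφ(j) = φ(i)·1_S(i) − (1/|V|)·Σ_{j∈S} φ(j)
  + Σ_{boundary darts u} n_S(u)·[Gi(π(u))·(φ(π₊(u)) − φ(π(u))) − φ(π(u))·(Gi(π₊(u)) − Gi(π(u)))]`. -/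
theorem greens_third_identity (G : SimpleGraph V) [DecidableRel G.Adj]
    (hconn : G.Connected) (S : Finset V) (i : V) (φ : V → ℝ) (Gi : V → ℝ)
    (hGi0 : ∑ j : V, Gi j = 0)
    (hGi : ∀ j : V, lap G Gi j = (if j = i then (1 : ℝ) else 0) - 1 / (Fintype.card V)) :
    ∑ j ∈ S, Gi j * lap G φ j =
      φ i * (if i ∈ S then (1 : ℝ) else 0) - (1 / (Fintype.card V)) * ∑ j ∈ S, φ j +
      ∑ u ∈ Finset.univ.filter (fun u : G.Dart => Xor (u.fst ∈ S) (u.snd ∈ S)),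
        (if u.fst ∈ S then (-1 : ℝ) else 1) *
          (Gi u.fst * (φ u.snd - φ u.fst) - φ u.fst * (Gi u.snd - Gi u.fst)) := by
  classical
  set D : G.Dart → ℝ :=
    fun u => Gi u.fst * (φ u.snd - φ u.fst) - φ u.fst * (Gi u.snd - Gi u.fst) with hDdef
  have hsf : ∀ u : G.Dart, u.symm.fst = u.snd := fun u => rfl
  have hss : ∀ u : G.Dart, u.symm.snd = u.fst := fun u => rfl
  have hDsymm : ∀ u : G.Dart, D u.symm = -D u := by
    intro u; simp only [hDdef, hsf, hss]; ring
  -- step 1: fiberwise rewriting of weighted Laplacian sums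
  have hfiber : ∀ ψ χ : V → ℝ, ∑ j ∈ S, χ j * lap G ψ j
      = ∑ u ∈ univ.filter (fun u : G.Dart => u.fst ∈ S),
          (-2) * (χ u.fst * (ψ u.snd - ψ u.fst)) := by
    intro ψ χ
    rw [← Finset.sum_fiberwise_of_maps_to
        (g := fun u : G.Dart => u.fst) (t := S)
        (fun u hu => (mem_filter.mp hu).2)
        (fun u => (-2) * (χ u.fst * (ψ u.snd - ψ u.fst)))]
    refine Finset.sum_congr rfl fun j hj => ?_
    have hset : (univ.filter (fun u : G.Dart => u.fst ∈ S)).filter (fun u => u.fst = j)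
        = univ.filter (fun u : G.Dart => u.fst = j) := by
      ext u
      simp only [mem_filter, mem_univ, true_and, and_iff_right_iff_imp]
      intro h; exact h ▸ hj
    rw [hset, lap, divergence, Finset.mul_sum]
    refine Finset.sum_congr rfl fun u hu => ?_
    have hf : u.fst = j := by simpa using (mem_filter.mp hu).2
    simp only [grad, hsf, hss, hf]
    ring
  -- step 2: the difference of weighted Laplacian sums
  have h1 : ∑ j ∈ S, Gi j * lap G φ j - ∑ j ∈ S, φ j * lap G Gi j
      = ∑ u ∈ univ.filter (fun u : G.Dart => u.fst ∈ S), (-2) * D u := by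
    rw [hfiber φ Gi, hfiber Gi φ, ← Finset.sum_sub_distrib]
    refine Finset.sum_congr rfl fun u hu => ?_
    simp only [hDdef]; ring
  -- step 3: interior darts cancel
  have hsplit :
      ∑ u ∈ (univ.filter (fun u : G.Dart => u.fst ∈ S)).filter (fun u => u.snd ∈ S), (-2) * D u
      + ∑ u ∈ (univ.filter (fun u : G.Dart => u.fst ∈ S)).filter (fun u => ¬ u.snd ∈ S),
          (-2) * D u
      = ∑ u ∈ univ.filter (fun u : G.Dart => u.fst ∈ S), (-2) * D u :=
    Finset.sum_filter_add_sum_filter_not _ _ _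
  have hint : ∑ u ∈ (univ.filter (fun u : G.Dart => u.fst ∈ S)).filter (fun u => u.snd ∈ S),
      (-2) * D u = 0 := by
    refine Finset.sum_involution (fun u _ => u.symm) ?_ ?_ ?_ ?_
    · intro u hu; rw [hDsymm]; ring
    · intro u hu _ h
      have h' : u.symm = u := h
      have h2 : u.toProd.2 = u.toProd.1 := by rw [← hsf u, h']
      exact (G.ne_of_adj u.adj) h2.symm
    · intro u hu
      simp only [mem_filter, mem_univ, true_and] at hu ⊢
      rw [hsf, hss]
      exact ⟨hu.2, hu.1⟩
    · intro u hu; exact SimpleGraph.Dart.symm_symm u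
  -- notation for the two boundary classes
  set A : Finset G.Dart :=
    (univ.filter (fun u : G.Dart => u.fst ∈ S)).filter (fun u => ¬ u.snd ∈ S) with hA
  set B : Finset G.Dart :=
    (univ.filter (fun u : G.Dart => ¬ u.fst ∈ S)).filter (fun u => u.snd ∈ S) with hB
  -- step 4: boundary sum splits as -2 * sum over A
  have hBA : ∑ u ∈ B, D u = - ∑ u ∈ A, D u := by
    rw [← Finset.sum_neg_distrib]
    refine Finset.sum_nbij' (fun u => u.symm) (fun u => u.symm) ?_ ?_ ?_ ?_ ?_
    · intro u hu
      simp only [hB, hA, mem_filter, mem_univ, true_and] at hu ⊢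
      rw [hsf, hss]
      exact ⟨hu.2, hu.1⟩
    · intro u hu
      simp only [hB, hA, mem_filter, mem_univ, true_and] at hu ⊢
      rw [hsf, hss]
      exact ⟨hu.2, hu.1⟩
    · intro u _; exact SimpleGraph.Dart.symm_symm u
    · intro u _; exact SimpleGraph.Dart.symm_symm u
    · intro u _; rw [hDsymm]; ring
  have hbdry : ∑ u ∈ univ.filter (fun u : G.Dart => Xor (u.fst ∈ S) (u.snd ∈ S)),
      (if u.fst ∈ S then (-1 : ℝ) else 1) * D u
      = ∑ u ∈ univ.filter (fun u : G.Dart => u.fst ∈ S), (-2) * D u := by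
    have hXS : univ.filter (fun u : G.Dart => Xor (u.fst ∈ S) (u.snd ∈ S))
        = A ∪ B := by
      ext u
      simp only [hA, hB, mem_filter, mem_univ, true_and, mem_union]
      rw [xor_def]
      tauto
    have hdisj : Disjoint A B := by
      rw [Finset.disjoint_left]
      intro u hu hu'
      simp only [hA, hB, mem_filter] at hu hu'
      exact hu'.1.2 hu.1.2
    rw [hXS, Finset.sum_union hdisj]
    have hAsum : ∑ u ∈ A, (if u.fst ∈ S then (-1 : ℝ) else 1) * D u = ∑ u ∈ A, -D u := by
      refine Finset.sum_congr rfl fun u hu => ?_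
      simp only [hA, mem_filter] at hu
      rw [if_pos hu.1.2]; ring
    have hBsum : ∑ u ∈ B, (if u.fst ∈ S then (-1 : ℝ) else 1) * D u = ∑ u ∈ B, D u := by
      refine Finset.sum_congr rfl fun u hu => ?_
      simp only [hB, mem_filter] at hu
      rw [if_neg hu.1.2]; ring
    rw [hAsum, hBsum, hBA, ← hsplit, hint, zero_add, Finset.sum_neg_distrib, ← Finset.mul_sum]
    ring
  -- step 5: evaluate the φ * ΔGi sum
  have h2 : ∑ j ∈ S, φ j * lap G Gi j
      = φ i * (if i ∈ S then (1 : ℝ) else 0) - (1 / (Fintype.card V)) * ∑ j ∈ S, φ j := by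
    have : ∀ j ∈ S, φ j * lap G Gi j
        = (if j = i then φ i else 0) - (1 / (Fintype.card V)) * φ j := by
      intro j _
      rw [hGi j]
      by_cases h : j = i
      · subst h; simp; ring
      · rw [if_neg h, if_neg h]; ring
    rw [Finset.sum_congr rfl this, Finset.sum_sub_distrib, Finset.sum_ite_eq' S i fun _ => φ i,
      ← Finset.mul_sum]
    by_cases h : i ∈ S <;> simp [h] <;> ring
  -- conclude
  have := hbdry
  linarith [h1, h2, hbdry]
end

section
/- Let A, B, C be finite-dimensional real inner product spaces and f: A → B, g: B → C linear maps with g ∘ f = 0. Then B = im(f) ⊕ im(g*) ⊕ ker(f f* + g* g) is an orthogonal direct sum decomposition, ker(f f* + g* g) = ker(f*) ∩ ker(g), and dim ker(g) − dim im(f) = dim ker(f f* + g* g), where f* and g* denote the adjoints of f and g. -/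
open Module

/-- Let `A`, `B`, `C` be finite dimensional real inner product spaces and `f : A → B`,
`g : B → C` linear maps with `g ∘ f = 0`. Then
`B = im(f) ⊕ im(g*) ⊕ ker(f f* + g* g)` is an orthogonal direct sum decomposition,
`ker(f f* + g* g) = ker(f*) ∩ ker(g)`, and
`dim ker(g) − dim im(f) = dim ker(f f* + g* g)`. -/
theorem hodge_decomposition_lemma
    {A B C : Type*}
    [NormedAddCommGroup A] [InnerProductSpace ℝ A] [FiniteDimensional ℝ A]
    [NormedAddCommGroup B] [InnerProductSpace ℝ B] [FiniteDimensional ℝ B]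
    [NormedAddCommGroup C] [InnerProductSpace ℝ C] [FiniteDimensional ℝ C]
    (f : A →ₗ[ℝ] B) (g : B →ₗ[ℝ] C) (hgf : g ∘ₗ f = 0) :
    -- pairwise orthogonality of the three summands
    (∀ x ∈ LinearMap.range f, ∀ y ∈ LinearMap.range (LinearMap.adjoint g),
      inner ℝ x y = (0 : ℝ)) ∧
    (∀ x ∈ LinearMap.range f,
      ∀ z ∈ LinearMap.ker (f ∘ₗ LinearMap.adjoint f + LinearMap.adjoint g ∘ₗ g),
      inner ℝ x z = (0 : ℝ)) ∧
    (∀ y ∈ LinearMap.range (LinearMap.adjoint g),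
      ∀ z ∈ LinearMap.ker (f ∘ₗ LinearMap.adjoint f + LinearMap.adjoint g ∘ₗ g),
      inner ℝ y z = (0 : ℝ)) ∧
    -- the three summands span B
    (LinearMap.range f ⊔ LinearMap.range (LinearMap.adjoint g) ⊔
        LinearMap.ker (f ∘ₗ LinearMap.adjoint f + LinearMap.adjoint g ∘ₗ g) = ⊤) ∧
    -- ker(f f* + g* g) = ker(f*) ∩ ker(g)
    (LinearMap.ker (f ∘ₗ LinearMap.adjoint f + LinearMap.adjoint g ∘ₗ g) =
      LinearMap.ker (LinearMap.adjoint f) ⊓ LinearMap.ker g) ∧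
    -- dim ker(g) − dim im(f) = dim ker(f f* + g* g)
    ((finrank ℝ (LinearMap.ker g) : ℤ) - finrank ℝ (LinearMap.range f) =
      finrank ℝ (LinearMap.ker (f ∘ₗ LinearMap.adjoint f + LinearMap.adjoint g ∘ₗ g))) := by
  -- key: ker(f f* + g* g) = ker f* ⊓ ker g
  have hker : LinearMap.ker (f ∘ₗ LinearMap.adjoint f + LinearMap.adjoint g ∘ₗ g) =
      LinearMap.ker (LinearMap.adjoint f) ⊓ LinearMap.ker g := by
    ext x
    simp only [LinearMap.mem_ker, Submodule.mem_inf, LinearMap.add_apply, LinearMap.comp_apply]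
    constructor
    · intro h
      have h0 : (0 : ℝ) = ‖LinearMap.adjoint f x‖ ^ 2 + ‖g x‖ ^ 2 := by
        have h1 : inner (𝕜 := ℝ)
            (f (LinearMap.adjoint f x) + LinearMap.adjoint g (g x)) x = 0 := by
          rw [h, inner_zero_left]
        rw [inner_add_left, ← LinearMap.adjoint_inner_right f, LinearMap.adjoint_inner_left g,
          real_inner_self_eq_norm_sq, real_inner_self_eq_norm_sq] at h1
        linarith
      constructor
      · have : ‖LinearMap.adjoint f x‖ ^ 2 = 0 := by nlinarith [sq_nonneg ‖g x‖]
        simpa using pow_eq_zero_iff (n := 2) (by norm_num) |>.mp this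
      · have : ‖g x‖ ^ 2 = 0 := by nlinarith [sq_nonneg ‖LinearMap.adjoint f x‖]
        simpa using pow_eq_zero_iff (n := 2) (by norm_num) |>.mp this
    · rintro ⟨h1, h2⟩
      simp [h1, h2]
  -- ker f* = (range f)ᗮ, ker g = (range g*)ᗮ
  have hkf : LinearMap.ker (LinearMap.adjoint f) = (LinearMap.range f)ᗮ := by
    ext x
    simp only [LinearMap.mem_ker, Submodule.mem_orthogonal]
    constructor
    · intro h u hu
      obtain ⟨a, rfl⟩ := hu
      rw [← LinearMap.adjoint_inner_right, h, inner_zero_right]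
    · intro h
      have := h (f (LinearMap.adjoint f x)) ⟨_, rfl⟩
      rw [← LinearMap.adjoint_inner_right, real_inner_self_eq_norm_sq] at this
      simpa using pow_eq_zero_iff (n := 2) (by norm_num) |>.mp this
  have hkg : LinearMap.ker g = (LinearMap.range (LinearMap.adjoint g))ᗮ := by
    ext x
    simp only [LinearMap.mem_ker, Submodule.mem_orthogonal]
    constructor
    · intro h u hu
      obtain ⟨c, rfl⟩ := hu
      rw [real_inner_comm, LinearMap.adjoint_inner_right, h, inner_zero_left]
    · intro h
      have := h (LinearMap.adjoint g (g x)) ⟨_, rfl⟩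
      rw [LinearMap.adjoint_inner_left, real_inner_self_eq_norm_sq] at this
      simpa using pow_eq_zero_iff (n := 2) (by norm_num) |>.mp this
  have horth1 : ∀ x ∈ LinearMap.range f, ∀ y ∈ LinearMap.range (LinearMap.adjoint g),
      inner ℝ x y = (0 : ℝ) := by
    rintro _ ⟨a, rfl⟩ _ ⟨c, rfl⟩
    rw [LinearMap.adjoint_inner_right]
    have : g (f a) = 0 := by
      have := congrFun (congrArg DFunLike.coe hgf) a
      simpa using this
    simp [this]
  have horth2 : ∀ x ∈ LinearMap.range f,
      ∀ z ∈ LinearMap.ker (f ∘ₗ LinearMap.adjoint f + LinearMap.adjoint g ∘ₗ g),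
      inner ℝ x z = (0 : ℝ) := by
    rintro _ ⟨a, rfl⟩ z hz
    rw [hker] at hz
    have h1 : LinearMap.adjoint f z = 0 := hz.1
    rw [real_inner_comm, ← LinearMap.adjoint_inner_left, h1, inner_zero_left]
  have horth3 : ∀ y ∈ LinearMap.range (LinearMap.adjoint g),
      ∀ z ∈ LinearMap.ker (f ∘ₗ LinearMap.adjoint f + LinearMap.adjoint g ∘ₗ g),
      inner ℝ y z = (0 : ℝ) := by
    rintro _ ⟨c, rfl⟩ z hz
    rw [hker] at hz
    have h2 : g z = 0 := hz.2
    rw [LinearMap.adjoint_inner_left, h2, inner_zero_right]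
  -- Z = (range f ⊔ range g*)ᗮ
  have hZ : LinearMap.ker (f ∘ₗ LinearMap.adjoint f + LinearMap.adjoint g ∘ₗ g) =
      (LinearMap.range f ⊔ LinearMap.range (LinearMap.adjoint g))ᗮ := by
    rw [hker, hkf, hkg, Submodule.inf_orthogonal]
  have hspan : LinearMap.range f ⊔ LinearMap.range (LinearMap.adjoint g) ⊔
      LinearMap.ker (f ∘ₗ LinearMap.adjoint f + LinearMap.adjoint g ∘ₗ g) = ⊤ := by
    rw [hZ]
    exact Submodule.sup_orthogonal_of_hasOrthogonalProjection
  refine ⟨horth1, horth2, horth3, hspan, hker, ?_⟩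
  -- dimension count
  have hinf : LinearMap.range f ⊓ LinearMap.range (LinearMap.adjoint g) = ⊥ := by
    rw [Submodule.eq_bot_iff]
    intro x ⟨hx1, hx2⟩
    have := horth1 x hx1 x hx2
    exact inner_self_eq_zero.mp this
  have hsum : finrank ℝ (LinearMap.range f ⊔ LinearMap.range (LinearMap.adjoint g) :
      Submodule ℝ B) = finrank ℝ (LinearMap.range f) +
      finrank ℝ (LinearMap.range (LinearMap.adjoint g)) := by
    have := Submodule.finrank_sup_add_finrank_inf_eq (LinearMap.range f)
      (LinearMap.range (LinearMap.adjoint g))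
    rw [hinf] at this
    simpa using this
  have h1 : finrank ℝ (LinearMap.range f ⊔ LinearMap.range (LinearMap.adjoint g) :
      Submodule ℝ B) +
      finrank ℝ (LinearMap.ker (f ∘ₗ LinearMap.adjoint f + LinearMap.adjoint g ∘ₗ g)) =
      finrank ℝ B := by
    rw [hZ]
    exact Submodule.finrank_add_finrank_orthogonal _
  have h2 : finrank ℝ (LinearMap.range (LinearMap.adjoint g)) +
      finrank ℝ (LinearMap.ker g) = finrank ℝ B := by
    rw [hkg]
    exact Submodule.finrank_add_finrank_orthogonal _
  rw [hsum] at h1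
  omega
end
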